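/- Let 0 < p < ∞ and let (f_n) be a sequence in L^p(ℝ^d) with limsup ‖f_n‖_{L^p} < ∞. If f_n → f almost everywhere, then ∫_{ℝ^d} | |f_n|^p − |f_n − f|^p − |f|^p | dx → 0 as n → ∞; in particular ‖f_n‖_{L^p}^p − ‖f_n − f‖_{L^p}^p → ‖f‖_{L^p}^p. -/

import Mathlib

open MeasureTheory Filter

-- key elementary inequality
lemma keyK (p : ℝ) (hp : 0 < p) {ε : ℝ} (hε : 0 < ε) :
    ∃ C : ℝ, 0 ≤ C ∧ ∀ a b : ℝ, 0 ≤ a → 0 ≤ b → (a + b) ^ p ≤ (1 + ε) * a ^ p + C * b ^ p := by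
  set δ : ℝ := (1 + ε) ^ p⁻¹ - 1 with hδdef
  have h1 : (1:ℝ) < (1 + ε) ^ p⁻¹ :=
    Real.one_lt_rpow_iff_of_pos (by linarith) |>.2 (Or.inl ⟨by linarith, by positivity⟩)
  have hδ : 0 < δ := by simp [hδdef]; linarith
  have h1δ : (1 + δ) ^ p = 1 + ε := by
    rw [hδdef]; ring_nf
    rw [add_comm, Real.rpow_inv_rpow (by linarith) hp.ne']
  refine ⟨((1 + δ) / δ) ^ p, by positivity, fun a b ha hb => ?_⟩
  by_cases hba : b ≤ δ * a
  · have : (a + b) ^ p ≤ ((1 + δ) * a) ^ p :=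
      Real.rpow_le_rpow (by linarith) (by linarith [hδ.le]) hp.le
    rw [Real.mul_rpow (by linarith) ha, h1δ] at this
    nlinarith [Real.rpow_nonneg hb p, Real.rpow_nonneg (show (0:ℝ) ≤ (1+δ)/δ by positivity) p]
  · push_neg at hba
    have ha' : a ≤ b / δ := by
      rw [le_div_iff₀ hδ]; nlinarith
    have : (a + b) ^ p ≤ ((1 + δ) / δ * b) ^ p := by
      apply Real.rpow_le_rpow (by linarith) _ hp.le
      rw [div_mul_eq_mul_div, le_div_iff₀ hδ]; nlinarith
    rw [Real.mul_rpow (by positivity) hb] at this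
    nlinarith [Real.rpow_nonneg ha p, hε.le]

-- Brezis–Lieb pointwise inequality
lemma keyBL (p : ℝ) (hp : 0 < p) {ε : ℝ} (hε : 0 < ε) :
    ∃ C : ℝ, 0 ≤ C ∧ ∀ u v : ℂ,
      |‖u + v‖ ^ p - ‖u‖ ^ p - ‖v‖ ^ p| ≤ ε * ‖u‖ ^ p + C * ‖v‖ ^ p := by
  set ε₀ : ℝ := min ε 1 / 2 with hε₀def
  have hε₀ : 0 < ε₀ := by positivity
  have hε₀1 : ε₀ ≤ 1/2 := by simp [hε₀def]; linarith [min_le_right ε 1]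
  have hε₀ε : ε₀ ≤ ε/2 := by simp [hε₀def]; linarith [min_le_left ε 1]
  obtain ⟨C₀, hC₀, hK⟩ := keyK p hp hε₀
  refine ⟨ε₀ * C₀ + C₀ + 1, by positivity, fun u v => ?_⟩
  set a := ‖u‖; set b := ‖v‖; set x := ‖u + v‖
  have ha : 0 ≤ a := norm_nonneg u
  have hb : 0 ≤ b := norm_nonneg v
  have hx : 0 ≤ x := norm_nonneg _
  have hxa : x ≤ a + b := norm_add_le u v
  have hax : a ≤ x + b := by simpa using norm_sub_le (u + v) v
  have h1 : x ^ p ≤ (1 + ε₀) * a ^ p + C₀ * b ^ p :=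
    le_trans (Real.rpow_le_rpow hx hxa hp.le) (hK a b ha hb)
  have h2 : a ^ p ≤ (1 + ε₀) * x ^ p + C₀ * b ^ p :=
    le_trans (Real.rpow_le_rpow ha hax hp.le) (hK x b hx hb)
  have hap : 0 ≤ a ^ p := Real.rpow_nonneg ha p
  have hbp : 0 ≤ b ^ p := Real.rpow_nonneg hb p
  have hxp : 0 ≤ x ^ p := Real.rpow_nonneg hx p
  have key : ε₀ * (1 + ε₀) ≤ ε := by nlinarith
  have h3 : ε₀ * x ^ p ≤ ε₀ * ((1 + ε₀) * a ^ p + C₀ * b ^ p) :=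
    mul_le_mul_of_nonneg_left h1 hε₀.le
  have h4 : ε₀ * (1 + ε₀) * a ^ p ≤ ε * a ^ p := mul_le_mul_of_nonneg_right key hap
  have h5 : ε₀ * a ^ p ≤ ε * a ^ p := mul_le_mul_of_nonneg_right (by linarith) hap
  rw [abs_le]
  constructor
  · nlinarith
  · nlinarith

lemma two_rpow_bound (p : ℝ) (hp : 0 < p) (a b : ℝ) (ha : 0 ≤ a) (hb : 0 ≤ b) :
    (a + b) ^ p ≤ 2 ^ p * (a ^ p + b ^ p) := by
  have h1 : (a + b) ^ p ≤ (2 * max a b) ^ p := by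
    apply Real.rpow_le_rpow (by linarith) _ hp.le
    rcases le_total a b with h | h <;> simp [max_eq_right, max_eq_left, h] <;> linarith
  rw [Real.mul_rpow (by norm_num) (by positivity)] at h1
  have h2 : (max a b) ^ p ≤ a ^ p + b ^ p := by
    rcases le_total a b with h | h
    · rw [max_eq_right h]; nlinarith [Real.rpow_nonneg ha p]
    · rw [max_eq_left h]; nlinarith [Real.rpow_nonneg hb p]
  nlinarith [Real.rpow_nonneg (show (0:ℝ) ≤ 2 by norm_num) p]

/-- **Refined Fatou lemma (Brezis–Lieb)**: if `0 < p < ∞`, `(fₙ)` is a sequence in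
`L^p(ℝ^d)` with `limsup ‖fₙ‖_{L^p} < ∞` and `fₙ → g` almost everywhere, then
`∫ ||fₙ|^p − |fₙ − g|^p − |g|^p| → 0`, and in particular
`‖fₙ‖_{L^p}^p − ‖fₙ − g‖_{L^p}^p → ‖g‖_{L^p}^p`. -/
theorem brezis_lieb_refined_fatou (d : ℕ) (p : ℝ) (hp : 0 < p)
    (f : ℕ → (Fin d → ℝ) → ℂ) (g : (Fin d → ℝ) → ℂ)
    (hf : ∀ n, MemLp (f n) (ENNReal.ofReal p) volume)
    (hg : AEStronglyMeasurable g volume)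
    (hbdd : limsup (fun n => eLpNorm (f n) (ENNReal.ofReal p) volume) atTop < ⊤)
    (hae : ∀ᵐ x : (Fin d → ℝ) ∂volume, Tendsto (fun n => f n x) atTop (nhds (g x))) :
    Tendsto (fun n => ∫ x : (Fin d → ℝ),
        |‖f n x‖ ^ p - ‖f n x - g x‖ ^ p - ‖g x‖ ^ p|) atTop (nhds 0)
    ∧ Tendsto (fun n => (∫ x : (Fin d → ℝ), ‖f n x‖ ^ p)
        - ∫ x : (Fin d → ℝ), ‖f n x - g x‖ ^ p) atTop
        (nhds (∫ x : (Fin d → ℝ), ‖g x‖ ^ p)) := by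
  have hp0 : (ENNReal.ofReal p) ≠ 0 := (ENNReal.ofReal_pos.2 hp).ne'
  have hptop : (ENNReal.ofReal p) ≠ ⊤ := ENNReal.ofReal_ne_top
  have hpt : (ENNReal.ofReal p).toReal = p := ENNReal.toReal_ofReal hp.le
  -- g ∈ L^p
  have hgmem : MemLp g (ENNReal.ofReal p) volume := by
    refine ⟨hg, lt_of_le_of_lt (Lp.eLpNorm_lim_le_liminf_eLpNorm (fun n => (hf n).1) g hae) ?_⟩
    exact lt_of_le_of_lt liminf_le_limsup hbdd
  have hfgmem : ∀ n, MemLp (fun x => f n x - g x) (ENNReal.ofReal p) volume := by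
    intro n; exact (hf n).sub hgmem
  -- integrability
  have intf : ∀ n, Integrable (fun x => ‖f n x‖ ^ p) volume := by
    intro n; have := (hf n).integrable_norm_rpow hp0 hptop; rwa [hpt] at this
  have intg : Integrable (fun x => ‖g x‖ ^ p) volume := by
    have := hgmem.integrable_norm_rpow hp0 hptop; rwa [hpt] at this
  have intfg : ∀ n, Integrable (fun x => ‖f n x - g x‖ ^ p) volume := by
    intro n; have := (hfgmem n).integrable_norm_rpow hp0 hptop; rwa [hpt] at this
  have inth : ∀ n, Integrable
      (fun x => |‖f n x‖ ^ p - ‖f n x - g x‖ ^ p - ‖g x‖ ^ p|) volume := by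
    intro n; exact (((intf n).sub (intfg n)).sub intg).abs
  -- uniform eventual bound on ∫ ‖f n − g‖^p
  obtain ⟨B, hBlt, hBtop⟩ := exists_between hbdd
  have hev : ∀ᶠ n in atTop, eLpNorm (f n) (ENNReal.ofReal p) volume < B :=
    eventually_lt_of_limsup_lt hBlt
  set M : ℝ := 2 ^ p * (B.toReal ^ p + ∫ x : (Fin d → ℝ), ‖g x‖ ^ p) with hMdef
  have hgint_nonneg : 0 ≤ ∫ x : (Fin d → ℝ), ‖g x‖ ^ p :=
    integral_nonneg fun x => Real.rpow_nonneg (norm_nonneg _) p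
  have hM0 : 0 ≤ M := by positivity
  have hqM : ∀ᶠ n in atTop, (∫ x : (Fin d → ℝ), ‖f n x - g x‖ ^ p) ≤ M := by
    filter_upwards [hev] with n hn
    have hIn : (∫ x : (Fin d → ℝ), ‖f n x‖ ^ p) ≤ B.toReal ^ p := by
      have heq := (hf n).eLpNorm_eq_integral_rpow_norm hp0 hptop
      rw [hpt] at heq
      rw [heq] at hn
      have hInn : 0 ≤ ∫ x : (Fin d → ℝ), ‖f n x‖ ^ p :=
        integral_nonneg fun x => Real.rpow_nonneg (norm_nonneg _) p
      have h1 : (∫ x : (Fin d → ℝ), ‖f n x‖ ^ p) ^ p⁻¹ ≤ B.toReal := by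
        rw [ENNReal.ofReal_lt_iff_lt_toReal (by positivity) hBtop.ne] at hn
        exact hn.le
      calc (∫ x : (Fin d → ℝ), ‖f n x‖ ^ p)
          = ((∫ x : (Fin d → ℝ), ‖f n x‖ ^ p) ^ p⁻¹) ^ p :=
            (Real.rpow_inv_rpow hInn hp.ne').symm
        _ ≤ B.toReal ^ p := Real.rpow_le_rpow (by positivity) h1 hp.le
    have hpoint : ∀ x, ‖f n x - g x‖ ^ p ≤ 2 ^ p * (‖f n x‖ ^ p + ‖g x‖ ^ p) := by
      intro x
      refine le_trans (Real.rpow_le_rpow (norm_nonneg _) (norm_sub_le _ _) hp.le) ?_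
      exact two_rpow_bound p hp _ _ (norm_nonneg _) (norm_nonneg _)
    calc (∫ x : (Fin d → ℝ), ‖f n x - g x‖ ^ p)
        ≤ ∫ x : (Fin d → ℝ), 2 ^ p * (‖f n x‖ ^ p + ‖g x‖ ^ p) :=
          integral_mono (intfg n) (((intf n).add intg).const_mul _) hpoint
      _ = 2 ^ p * ((∫ x : (Fin d → ℝ), ‖f n x‖ ^ p) + ∫ x : (Fin d → ℝ), ‖g x‖ ^ p) := by
          rw [integral_const_mul, integral_add (intf n) intg]
      _ ≤ M := by
          rw [hMdef]
          have : (0:ℝ) < 2 ^ p := by positivity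
          nlinarith
  -- part 1
  have part1 : Tendsto (fun n => ∫ x : (Fin d → ℝ),
      |‖f n x‖ ^ p - ‖f n x - g x‖ ^ p - ‖g x‖ ^ p|) atTop (nhds 0) := by
    rw [NormedAddCommGroup.tendsto_nhds_zero]
    intro ε hε
    set ε₀ : ℝ := ε / (2 * (M + 1)) with hε₀def
    have hε₀ : 0 < ε₀ := by positivity
    obtain ⟨C, hC0, hBL⟩ := keyBL p hp hε₀
    -- the truncated function W
    set W : ℕ → (Fin d → ℝ) → ℝ := fun n x =>
      max (|‖f n x‖ ^ p - ‖f n x - g x‖ ^ p - ‖g x‖ ^ p| - ε₀ * ‖f n x - g x‖ ^ p) 0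
      with hWdef
    have hBL' : ∀ n x, |‖f n x‖ ^ p - ‖f n x - g x‖ ^ p - ‖g x‖ ^ p|
        ≤ ε₀ * ‖f n x - g x‖ ^ p + C * ‖g x‖ ^ p := by
      intro n x
      have := hBL (f n x - g x) (g x)
      rwa [sub_add_cancel] at this
    have hWmeas : ∀ n, AEStronglyMeasurable (W n) volume := by
      intro n
      have h1 : AEMeasurable (fun x => |‖f n x‖ ^ p - ‖f n x - g x‖ ^ p - ‖g x‖ ^ p|
          - ε₀ * ‖f n x - g x‖ ^ p) volume :=
        (inth n).aestronglyMeasurable.aemeasurable.sub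
          (((intfg n).aestronglyMeasurable.aemeasurable).const_mul ε₀)
      exact (h1.max aemeasurable_const).aestronglyMeasurable
    have hWbound : ∀ n, ∀ᵐ x ∂(volume : Measure (Fin d → ℝ)), ‖W n x‖ ≤ C * ‖g x‖ ^ p := by
      intro n
      filter_upwards with x
      have h0 : 0 ≤ W n x := le_max_right _ _
      rw [Real.norm_of_nonneg h0, hWdef]
      have := hBL' n x
      have hCg : 0 ≤ C * ‖g x‖ ^ p := by positivity
      exact max_le (by linarith) hCg
    have hWlim : ∀ᵐ x ∂(volume : Measure (Fin d → ℝ)),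
        Tendsto (fun n => W n x) atTop (nhds 0) := by
      filter_upwards [hae] with x hx
      have h1 : Tendsto (fun n => ‖f n x‖ ^ p) atTop (nhds (‖g x‖ ^ p)) := by
        have := (continuous_norm.tendsto (g x)).comp hx
        exact (Real.continuousAt_rpow_const _ p (Or.inr hp.le)).tendsto.comp this
      have h2 : Tendsto (fun n => ‖f n x - g x‖ ^ p) atTop (nhds 0) := by
        have hsub : Tendsto (fun n => f n x - g x) atTop (nhds 0) := by
          have := hx.sub (tendsto_const_nhds (x := g x))
          rwa [sub_self] at this
        have := (continuous_norm.tendsto (0:ℂ)).comp hsub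
        simp only [norm_zero] at this
        have h3 := (Real.continuousAt_rpow_const 0 p (Or.inr hp.le)).tendsto.comp this
        simpa [Real.zero_rpow hp.ne', Function.comp_def] using h3
      have habs : Tendsto (fun n => |‖f n x‖ ^ p - ‖f n x - g x‖ ^ p - ‖g x‖ ^ p|)
          atTop (nhds 0) := by
        have h3 := (h1.sub h2).sub (tendsto_const_nhds (x := ‖g x‖ ^ p) (f := atTop))
        rw [sub_zero, sub_self] at h3
        simpa using h3.abs
      have : Tendsto (fun n => |‖f n x‖ ^ p - ‖f n x - g x‖ ^ p - ‖g x‖ ^ p|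
          - ε₀ * ‖f n x - g x‖ ^ p) atTop (nhds 0) := by
        simpa using habs.sub (h2.const_mul ε₀)
      have hmax := this.max (tendsto_const_nhds (x := (0:ℝ)) (f := atTop))
      rw [max_self] at hmax
      exact hmax
    have hWint : Tendsto (fun n => ∫ x : (Fin d → ℝ), W n x) atTop (nhds 0) := by
      have := tendsto_integral_of_dominated_convergence (fun x => C * ‖g x‖ ^ p)
        hWmeas (intg.const_mul C) hWbound (by simpa using hWlim)
      simpa using this
    have hε2 : (0:ℝ) < ε / 2 := by positivity
    have hWev : ∀ᶠ n in atTop, (∫ x : (Fin d → ℝ), W n x) < ε / 2 := by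
      have := hWint
      rw [Metric.tendsto_atTop] at this
      obtain ⟨N, hN⟩ := this (ε/2) hε2
      filter_upwards [eventually_ge_atTop N] with n hn
      have := hN n hn
      rw [Real.dist_eq, sub_zero] at this
      exact lt_of_le_of_lt (le_abs_self _) this
    filter_upwards [hqM, hWev] with n hqMn hWn
    have hWintg : Integrable (W n) volume :=
      Integrable.mono' (intg.const_mul C) (hWmeas n) (hWbound n)
    have hint_le : (∫ x : (Fin d → ℝ), |‖f n x‖ ^ p - ‖f n x - g x‖ ^ p - ‖g x‖ ^ p|)
        ≤ (∫ x : (Fin d → ℝ), W n x) + ε₀ * ∫ x : (Fin d → ℝ), ‖f n x - g x‖ ^ p := by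
      rw [← integral_const_mul, ← integral_add hWintg ((intfg n).const_mul ε₀)]
      refine integral_mono (inth n) (hWintg.add ((intfg n).const_mul ε₀)) fun x => ?_
      have := le_max_left (|‖f n x‖ ^ p - ‖f n x - g x‖ ^ p - ‖g x‖ ^ p|
        - ε₀ * ‖f n x - g x‖ ^ p) (0:ℝ)
      simp only [hWdef]; linarith
    have hnonneg : 0 ≤ ∫ x : (Fin d → ℝ), |‖f n x‖ ^ p - ‖f n x - g x‖ ^ p - ‖g x‖ ^ p| :=
      integral_nonneg fun x => abs_nonneg _
    rw [Real.norm_of_nonneg hnonneg]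
    have hqn : 0 ≤ ∫ x : (Fin d → ℝ), ‖f n x - g x‖ ^ p :=
      integral_nonneg fun x => Real.rpow_nonneg (norm_nonneg _) p
    have hε₀M : ε₀ * (∫ x : (Fin d → ℝ), ‖f n x - g x‖ ^ p) ≤ ε / 2 := by
      have h1 : ε₀ * (∫ x : (Fin d → ℝ), ‖f n x - g x‖ ^ p) ≤ ε₀ * M :=
        mul_le_mul_of_nonneg_left hqMn hε₀.le
      have h2 : ε₀ * M ≤ ε / 2 := by
        rw [hε₀def, div_mul_eq_mul_div, div_le_iff₀ (by positivity)]
        nlinarith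
      linarith
    linarith
  refine ⟨part1, ?_⟩
  -- part 2
  have heq : ∀ n, (∫ x : (Fin d → ℝ), ‖f n x‖ ^ p) - (∫ x : (Fin d → ℝ), ‖f n x - g x‖ ^ p)
      - (∫ x : (Fin d → ℝ), ‖g x‖ ^ p)
      = ∫ x : (Fin d → ℝ), (‖f n x‖ ^ p - ‖f n x - g x‖ ^ p - ‖g x‖ ^ p) := by
    intro n
    have i1 : Integrable (fun x => ‖f n x‖ ^ p - ‖f n x - g x‖ ^ p) volume :=
      (intf n).sub (intfg n)
    rw [integral_sub i1 intg, integral_sub (intf n) (intfg n)]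
  have hD : Tendsto (fun n => (∫ x : (Fin d → ℝ), ‖f n x‖ ^ p)
      - (∫ x : (Fin d → ℝ), ‖f n x - g x‖ ^ p) - (∫ x : (Fin d → ℝ), ‖g x‖ ^ p))
      atTop (nhds 0) := by
    apply squeeze_zero_norm _ part1
    intro n
    rw [heq n]
    calc ‖∫ x : (Fin d → ℝ), (‖f n x‖ ^ p - ‖f n x - g x‖ ^ p - ‖g x‖ ^ p)‖
        ≤ ∫ x : (Fin d → ℝ), ‖‖f n x‖ ^ p - ‖f n x - g x‖ ^ p - ‖g x‖ ^ p‖ :=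
          norm_integral_le_integral_norm _
      _ = ∫ x : (Fin d → ℝ), |‖f n x‖ ^ p - ‖f n x - g x‖ ^ p - ‖g x‖ ^ p| := by
          simp [Real.norm_eq_abs]
  have := hD.add_const (∫ x : (Fin d → ℝ), ‖g x‖ ^ p)
  simpa using this
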